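/- Let u* solve u*'(t) = α(t)[u*(t) - b(t)·u*(t)²] on ℝ with e^{-αt}u*(t) → 1 as t → -∞, where |α(t) - α| ≤ K e^{αt}, |b(t) - b| ≤ K e^{αt}, α, b, K > 0, and 0 ≤ u*(t) ≤ C e^{αt}. Let û solve the same equation with b(t) replaced by the constant b and the same boundary behaviour at -∞. Then |u*(t) - û(t)| = O(e^{3αt}) as t → -∞; i.e., there exist constants M, T with |u*(t) - û(t)| ≤ M e^{3αt} for all t ≤ T. -/

import Mathlib

open Real Filter
open scoped Topology

private lemma exp_integ (a : ℝ) (ha : 0 < a) (s t : ℝ) :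
    ∫ τ in s..t, Real.exp (a * τ) = (Real.exp (a * t) - Real.exp (a * s)) / a := by
  have h : ∀ τ ∈ Set.uIcc s t,
      HasDerivAt (fun σ => Real.exp (a * σ) / a) (Real.exp (a * τ)) τ := by
    intro τ _
    have h1 : HasDerivAt (fun σ : ℝ => a * σ) a τ := by
      simpa using (hasDerivAt_id τ).const_mul a
    have h2 := h1.exp.div_const a
    have : Real.exp (a * τ) * a / a = Real.exp (a * τ) := by
      field_simp
    rwa [this] at h2
  have hcont : Continuous fun τ : ℝ => Real.exp (a * τ) := by continuity
  have := intervalIntegral.integral_eq_sub_of_hasDerivAt h (hcont.intervalIntegrable s t)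
  rw [this]; ring

/-- Comparison of the logistic-type solutions with variable and constant coefficient `b`:
if `u*` solves `u*' = α(t)[u* - b(t)(u*)²]` and `û` solves the same equation with `b(t)`
replaced by the constant `b`, both with `e^{-αt}u(t) → 1` as `t → -∞`, with
`|α(t) - α| ≤ K e^{αt}`, `|b(t) - b| ≤ K e^{αt}`, and both solutions nonnegative and bounded
by `C e^{αt}` for `t ≤ T₀`, then `|u*(t) - û(t)| = O(e^{3αt})` as `t → -∞`. -/
theorem logistic_constant_coefficient_comparison
    (α b K C T₀ : ℝ) (hα : 0 < α) (hb : 0 < b) (hK : 0 < K) (hC : 0 < C)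
    (afun bfun : ℝ → ℝ) (hac : Continuous afun) (hbc : Continuous bfun)
    (haclose : ∀ t : ℝ, |afun t - α| ≤ K * Real.exp (α * t))
    (hbclose : ∀ t : ℝ, |bfun t - b| ≤ K * Real.exp (α * t))
    (ustar uhat : ℝ → ℝ)
    (hustar : ∀ t : ℝ, HasDerivAt ustar (afun t * (ustar t - bfun t * ustar t ^ 2)) t)
    (huhat : ∀ t : ℝ, HasDerivAt uhat (afun t * (uhat t - b * uhat t ^ 2)) t)
    (hstar_lim : Tendsto (fun t : ℝ => Real.exp (-(α * t)) * ustar t) atBot (𝓝 1))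
    (hhat_lim : Tendsto (fun t : ℝ => Real.exp (-(α * t)) * uhat t) atBot (𝓝 1))
    (hstar_bd : ∀ t : ℝ, t ≤ T₀ → 0 ≤ ustar t ∧ ustar t ≤ C * Real.exp (α * t))
    (hhat_bd : ∀ t : ℝ, t ≤ T₀ → 0 ≤ uhat t ∧ uhat t ≤ C * Real.exp (α * t)) :
    ∃ M T : ℝ, ∀ t : ℝ, t ≤ T → |ustar t - uhat t| ≤ M * Real.exp (3 * α * t) := by
  -- Setup
  set T₁ : ℝ := min T₀ 0 with hT₁def
  have hT₁0 : T₁ ≤ 0 := min_le_right _ _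
  have hT₁T₀ : T₁ ≤ T₀ := min_le_left _ _
  set c : ℝ → ℝ := fun t => afun t * (1 - b * (ustar t + uhat t)) with hcdef
  set r : ℝ → ℝ := fun t => -(afun t * ((bfun t - b) * ustar t ^ 2)) with hrdef
  set v : ℝ → ℝ := fun t => ustar t - uhat t with hvdef
  have hucont : Continuous ustar :=
    continuous_iff_continuousAt.2 fun t => (hustar t).differentiableAt.continuousAt
  have hhcont : Continuous uhat :=
    continuous_iff_continuousAt.2 fun t => (huhat t).differentiableAt.continuousAt
  have hccont : Continuous c := by
    apply hac.mul
    exact continuous_const.sub (continuous_const.mul (hucont.add hhcont))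
  have hrcont : Continuous r := by
    exact (hac.mul (((hbc.sub continuous_const)).mul (hucont.pow 2))).neg
  have hv : ∀ t, HasDerivAt v (c t * v t + r t) t := by
    intro t
    have h := (hustar t).sub (huhat t)
    refine h.congr_deriv ?_
    simp only [hcdef, hrdef, hvdef]
    ring
  -- Φ
  set Φ : ℝ → ℝ := fun t => ∫ τ in T₁..t, c τ with hΦdef
  have hΦ : ∀ t, HasDerivAt Φ (c t) t := fun t =>
    intervalIntegral.integral_hasDerivAt_right (hccont.intervalIntegrable _ _)
      (hccont.stronglyMeasurableAtFilter _ _) hccont.continuousAt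
  have hΦcont : Continuous Φ :=
    continuous_iff_continuousAt.2 fun t => (hΦ t).differentiableAt.continuousAt
  set y : ℝ → ℝ := fun t => Real.exp (-Φ t) * v t with hydef
  have hy : ∀ t, HasDerivAt y (Real.exp (-Φ t) * r t) t := by
    intro t
    have h1 : HasDerivAt (fun s => Real.exp (-Φ s)) (Real.exp (-Φ t) * (-c t)) t := by
      simpa [mul_comm] using ((hΦ t).neg).exp
    have h2 := h1.mul (hv t)
    refine h2.congr_deriv ?_
    ring
  -- constants
  set K' : ℝ := K + (α + K) * (b * (2 * C)) with hK'def
  set D : ℝ := K' / α with hDdef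
  set C₁ : ℝ := (α + K) * (K * C ^ 2) with hC₁def
  set C₂ : ℝ := Real.exp D * C₁ with hC₂def
  have hK'pos : 0 < K' := by positivity
  have hC₁pos : 0 < C₁ := by positivity
  have hC₂pos : 0 < C₂ := by positivity
  have hexp1 : ∀ t : ℝ, t ≤ T₁ → Real.exp (α * t) ≤ 1 := by
    intro t ht
    rw [Real.exp_le_one_iff]
    exact mul_nonpos_of_nonneg_of_nonpos hα.le (ht.trans hT₁0)
  -- |afun t| ≤ α + K for t ≤ T₁
  have ha_bd : ∀ t : ℝ, t ≤ T₁ → |afun t| ≤ α + K := by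
    intro t ht
    have h1 := haclose t
    have h2 := hexp1 t ht
    have h3 : K * Real.exp (α * t) ≤ K := by nlinarith [Real.exp_pos (α * t)]
    calc |afun t| = |α + (afun t - α)| := by ring_nf
      _ ≤ |α| + |afun t - α| := abs_add_le _ _
      _ ≤ α + K := by rw [abs_of_pos hα]; linarith
  -- |c t - α| ≤ K' e^{αt}
  have hc_bd : ∀ t : ℝ, t ≤ T₁ → |c t - α| ≤ K' * Real.exp (α * t) := by
    intro t ht
    have hu := hstar_bd t (ht.trans hT₁T₀)
    have hh := hhat_bd t (ht.trans hT₁T₀)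
    have hsum : ustar t + uhat t ≤ 2 * C * Real.exp (α * t) := by linarith [hu.2, hh.2]
    have hsum0 : 0 ≤ ustar t + uhat t := by linarith [hu.1, hh.1]
    have h1 : c t - α = (afun t - α) + (-(afun t * (b * (ustar t + uhat t)))) := by
      simp only [hcdef]; ring
    rw [h1]
    calc |(afun t - α) + (-(afun t * (b * (ustar t + uhat t))))|
        ≤ |afun t - α| + |afun t * (b * (ustar t + uhat t))| := by
          simpa using abs_add_le (afun t - α) (-(afun t * (b * (ustar t + uhat t))))
      _ ≤ K * Real.exp (α * t) + (α + K) * (b * (2 * C * Real.exp (α * t))) := by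
          have h2 : |afun t * (b * (ustar t + uhat t))| = |afun t| * (b * (ustar t + uhat t)) := by
            rw [abs_mul, abs_of_nonneg (mul_nonneg hb.le hsum0)]
          rw [h2]
          have h3 : |afun t| * (b * (ustar t + uhat t)) ≤ (α + K) * (b * (2 * C * Real.exp (α * t))) := by
            apply mul_le_mul (ha_bd t ht) (by nlinarith) (by positivity) (by positivity)
          linarith [haclose t]
      _ = K' * Real.exp (α * t) := by rw [hK'def]; ring
  -- |r t| ≤ C₁ e^{3αt}
  have hr_bd : ∀ t : ℝ, t ≤ T₁ → |r t| ≤ C₁ * Real.exp (3 * α * t) := by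
    intro t ht
    have hu := hstar_bd t (ht.trans hT₁T₀)
    have h1 : |r t| = |afun t| * (|bfun t - b| * ustar t ^ 2) := by
      simp only [hrdef, abs_neg, abs_mul, abs_pow, sq_abs]
    rw [h1]
    have h2 : ustar t ^ 2 ≤ (C * Real.exp (α * t)) ^ 2 := by
      apply pow_le_pow_left₀ hu.1 hu.2
    have h3 : |bfun t - b| * ustar t ^ 2 ≤ (K * Real.exp (α * t)) * (C * Real.exp (α * t)) ^ 2 := by
      apply mul_le_mul (hbclose t) h2 (by positivity) (by positivity)
    have h4 : |afun t| * (|bfun t - b| * ustar t ^ 2)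
        ≤ (α + K) * ((K * Real.exp (α * t)) * (C * Real.exp (α * t)) ^ 2) := by
      apply mul_le_mul (ha_bd t ht) h3 (by positivity) (by positivity)
    have h5 : (α + K) * ((K * Real.exp (α * t)) * (C * Real.exp (α * t)) ^ 2)
        = C₁ * Real.exp (3 * α * t) := by
      rw [hC₁def, show (3 : ℝ) * α * t = α * t + (α * t + α * t) by ring,
        Real.exp_add, Real.exp_add]
      ring
    linarith
  -- |Φ t - α (t - T₁)| ≤ D
  have hΦ_bd : ∀ t : ℝ, t ≤ T₁ → |Φ t - α * (t - T₁)| ≤ D := by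
    intro t ht
    have hsymm : Φ t = -∫ τ in t..T₁, c τ := by
      rw [hΦdef]; exact (intervalIntegral.integral_symm t T₁) 
    have hconst : ∫ τ in t..T₁, (α : ℝ) = α * (T₁ - t) := by
      simp [mul_comm]
    have h1 : Φ t - α * (t - T₁) = -∫ τ in t..T₁, (c τ - α) := by
      rw [hsymm, intervalIntegral.integral_sub (hccont.intervalIntegrable _ _)
        (continuous_const.intervalIntegrable _ _), hconst]
      ring
    rw [h1, abs_neg]
    have h2 : |∫ τ in t..T₁, (c τ - α)| ≤ ∫ τ in t..T₁, |c τ - α| :=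
      intervalIntegral.abs_integral_le_integral_abs ht
    have h3 : (∫ τ in t..T₁, |c τ - α|) ≤ ∫ τ in t..T₁, K' * Real.exp (α * τ) := by
      apply intervalIntegral.integral_mono_on ht
        ((hccont.sub continuous_const).abs.intervalIntegrable _ _)
        ((continuous_const.mul (Real.continuous_exp.comp
          (continuous_const.mul continuous_id))).intervalIntegrable _ _)
      intro x hx
      exact hc_bd x hx.2
    have h4 : (∫ τ in t..T₁, K' * Real.exp (α * τ))
        = K' * ((Real.exp (α * T₁) - Real.exp (α * t)) / α) := by
      rw [intervalIntegral.integral_const_mul, exp_integ α hα]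
    have h5 : K' * ((Real.exp (α * T₁) - Real.exp (α * t)) / α) ≤ D := by
      have he1 := hexp1 T₁ le_rfl
      have he2 := (Real.exp_pos (α * t)).le
      rw [hDdef, show K' * ((Real.exp (α * T₁) - Real.exp (α * t)) / α)
        = K' * (Real.exp (α * T₁) - Real.exp (α * t)) / α by ring,
        div_le_div_iff_of_pos_right hα]
      nlinarith
    linarith
  have hΦ_le : ∀ t : ℝ, t ≤ T₁ → Φ t ≤ α * (t - T₁) + D := by
    intro t ht; have := abs_le.1 (hΦ_bd t ht); linarith [this.2]
  have hΦ_ge : ∀ t : ℝ, t ≤ T₁ → α * (t - T₁) - D ≤ Φ t := by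
    intro t ht; have := abs_le.1 (hΦ_bd t ht); linarith [this.1]
  -- integrand bound
  have hint_bd : ∀ τ : ℝ, τ ≤ T₁ → |Real.exp (-Φ τ) * r τ| ≤ C₂ * Real.exp (2 * α * τ) := by
    intro τ hτ
    have h1 : Real.exp (-Φ τ) ≤ Real.exp D * Real.exp (-(α * τ)) := by
      rw [← Real.exp_add]
      apply Real.exp_le_exp.2
      have := hΦ_ge τ hτ
      have hαT₁ : α * T₁ ≤ 0 := mul_nonpos_of_nonneg_of_nonpos hα.le hT₁0
      nlinarith
    have h2 : |Real.exp (-Φ τ) * r τ| = Real.exp (-Φ τ) * |r τ| := by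
      rw [abs_mul, abs_of_pos (Real.exp_pos _)]
    rw [h2]
    calc Real.exp (-Φ τ) * |r τ|
        ≤ (Real.exp D * Real.exp (-(α * τ))) * (C₁ * Real.exp (3 * α * τ)) := by
          apply mul_le_mul h1 (hr_bd τ hτ) (abs_nonneg _) (by positivity)
      _ = C₂ * Real.exp (2 * α * τ) := by
          have hmerge : Real.exp (-(α * τ)) * Real.exp (3 * α * τ) = Real.exp (2 * α * τ) := by
            rw [← Real.exp_add]; congr 1; ring
          rw [hC₂def, ← hmerge]; ring
  -- FTC for y
  have hftc : ∀ s t : ℝ, (∫ τ in s..t, Real.exp (-Φ τ) * r τ) = y t - y s := by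
    intro s t
    apply intervalIntegral.integral_eq_sub_of_hasDerivAt (fun τ _ => hy τ)
    exact ((Real.continuous_exp.comp hΦcont.neg).mul hrcont).intervalIntegrable _ _
  -- Bound on increments
  have hincr : ∀ s t : ℝ, s ≤ t → t ≤ T₁ →
      |y t - y s| ≤ C₂ / (2 * α) * Real.exp (2 * α * t) := by
    intro s t hst ht
    rw [← hftc s t]
    have h2 : |∫ τ in s..t, Real.exp (-Φ τ) * r τ| ≤ ∫ τ in s..t, |Real.exp (-Φ τ) * r τ| :=
      intervalIntegral.abs_integral_le_integral_abs hst
    have h3 : (∫ τ in s..t, |Real.exp (-Φ τ) * r τ|) ≤ ∫ τ in s..t, C₂ * Real.exp (2 * α * τ) := by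
      apply intervalIntegral.integral_mono_on hst
        (((Real.continuous_exp.comp hΦcont.neg).mul hrcont).abs.intervalIntegrable _ _)
        ((continuous_const.mul (Real.continuous_exp.comp
          (continuous_const.mul continuous_id))).intervalIntegrable _ _)
      intro x hx
      exact hint_bd x (hx.2.trans ht)
    have h4 : (∫ τ in s..t, C₂ * Real.exp (2 * α * τ))
        = C₂ * ((Real.exp (2 * α * t) - Real.exp (2 * α * s)) / (2 * α)) := by
      rw [intervalIntegral.integral_const_mul, exp_integ (2 * α) (by positivity)]
    have h6 : C₂ * ((Real.exp (2 * α * t) - Real.exp (2 * α * s)) / (2 * α))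
        ≤ C₂ / (2 * α) * Real.exp (2 * α * t) := by
      have h2α : (0:ℝ) < 2 * α := by positivity
      rw [show C₂ / (2 * α) * Real.exp (2 * α * t) = C₂ * (Real.exp (2 * α * t) / (2 * α)) by ring]
      apply mul_le_mul_of_nonneg_left _ hC₂pos.le
      rw [div_le_div_iff_of_pos_right h2α]
      linarith [(Real.exp_pos (2 * α * s)).le]
    linarith
  -- y tends to 0 at -∞
  have hvlim : Tendsto (fun s : ℝ => Real.exp (-(α * s)) * v s) atBot (𝓝 0) := by
    have h := hstar_lim.sub hhat_lim
    simp only [sub_self] at h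
    convert h using 2 with s
    simp only [hvdef]
    ring
  have hy0 : Tendsto y atBot (𝓝 0) := by
    apply squeeze_zero_norm' (a := fun s => Real.exp D * |Real.exp (-(α * s)) * v s|)
    · filter_upwards [eventually_le_atBot T₁] with s hs
      have h1 : Real.exp (-Φ s) ≤ Real.exp D * Real.exp (-(α * s)) := by
        rw [← Real.exp_add]
        apply Real.exp_le_exp.2
        have := hΦ_ge s hs
        have hαT₁ : α * T₁ ≤ 0 := mul_nonpos_of_nonneg_of_nonpos hα.le hT₁0
        nlinarith
      have h2 : ‖y s‖ = Real.exp (-Φ s) * |v s| := by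
        rw [hydef]
        simp only [Real.norm_eq_abs, abs_mul, abs_of_pos (Real.exp_pos _)]
      rw [h2, abs_mul, abs_of_pos (Real.exp_pos (-(α * s))), ← mul_assoc]
      exact mul_le_mul_of_nonneg_right h1 (abs_nonneg _)
    · have := (hvlim.abs).const_mul (Real.exp D)
      simpa using this
  -- Final bound on y
  have hy_bd : ∀ t : ℝ, t ≤ T₁ → |y t| ≤ C₂ / (2 * α) * Real.exp (2 * α * t) := by
    intro t ht
    have h1 : Tendsto (fun s : ℝ => |y t - y s|) atBot (𝓝 |y t|) := by
      have := (tendsto_const_nhds (x := y t) (f := atBot)).sub hy0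
      simpa using this.abs
    apply le_of_tendsto h1
    filter_upwards [eventually_le_atBot t] with s hs
    exact hincr s t hs ht
  -- Conclusion
  refine ⟨Real.exp D * Real.exp (-(α * T₁)) * (C₂ / (2 * α)), T₁, fun t ht => ?_⟩
  have hveq : v t = Real.exp (Φ t) * y t := by
    rw [hydef, ← mul_assoc, ← Real.exp_add]
    simp
  have h1 : |v t| = Real.exp (Φ t) * |y t| := by
    rw [hveq, abs_mul, abs_of_pos (Real.exp_pos _)]
  have h2 : Real.exp (Φ t) ≤ Real.exp D * Real.exp (-(α * T₁)) * Real.exp (α * t) := by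
    rw [← Real.exp_add, ← Real.exp_add]
    apply Real.exp_le_exp.2
    have := hΦ_le t ht
    linarith
  have h3 : |ustar t - uhat t| = |v t| := by simp [hvdef]
  rw [h3, h1]
  calc Real.exp (Φ t) * |y t|
      ≤ (Real.exp D * Real.exp (-(α * T₁)) * Real.exp (α * t))
        * (C₂ / (2 * α) * Real.exp (2 * α * t)) := by
        apply mul_le_mul h2 (hy_bd t ht) (abs_nonneg _) (by positivity)
    _ = Real.exp D * Real.exp (-(α * T₁)) * (C₂ / (2 * α)) * Real.exp (3 * α * t) := by
        rw [show (3:ℝ) * α * t = α * t + 2 * α * t by ring, Real.exp_add]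
        ring
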